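/- Let Θ ⊆ Π be a subset of the simple roots of sl_n(ℂ), and suppose k ∈ {1,...,n−1} is such that α_k ∉ Θ. A Young diagram P of order n admits a Θ-codominant balanced semistandard {1,...,n}-filling if and only if there exists a Young diagram Q ⊆ P such that: Q admits a (Θ ∩ {α_1,...,α_{k−1}})-codominant balanced semistandard {1,...,k}-filling; the skew diagram P/Q admits a (Θ ∩ {α_{k+1},...,α_{n−1}})-codominant balanced semistandard {k+1,...,n}-filling; and #Q = (k/n)·#P. -/
import Mathlib


/-- A Young diagram of order `n`, given by its (weakly decreasing) row lengths,
vanishing from row `n` on. Rows are indexed from `0`. -/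
def IsYoung (n : ℕ) (P : ℕ → ℕ) : Prop :=
  (∀ i, P (i + 1) ≤ P i) ∧ ∀ i, n ≤ i → P i = 0

/-- The total number of boxes of a Young diagram of order `n`. -/
def ysize (n : ℕ) (P : ℕ → ℕ) : ℕ := ∑ i ∈ Finset.range n, P i

/-- The height of the `j`-th column (columns indexed from `0`). -/
def colH (n : ℕ) (P : ℕ → ℕ) (j : ℕ) : ℕ :=
  ((Finset.range n).filter (fun i => j < P i)).card

/-- The number of boxes of the skew diagram `P/Q`. -/
def skewSize (n : ℕ) (P Q : ℕ → ℕ) : ℕ := ∑ i ∈ Finset.range n, (P i - Q i)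

/-- The skew diagram `P/Q` has thickness at most `m`: every column has at most
`m` boxes. -/
def ThickLE (n : ℕ) (P Q : ℕ → ℕ) (m : ℕ) : Prop :=
  ∀ j, colH n P j ≤ colH n Q j + m

/-- `T` is a semistandard filling of the skew diagram `P/Q`: rows weakly increase
from left to right, columns strictly increase from top to bottom.
`T i j` is the entry in row `i`, column `j`. -/
def SkewSemistd (P Q : ℕ → ℕ) (T : ℕ → ℕ → ℕ) : Prop :=
  (∀ i j, Q i ≤ j → j + 1 < P i → T i j ≤ T i (j + 1)) ∧
  (∀ i j, Q i ≤ j → j < P (i + 1) → T i j < T (i + 1) j)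

/-- All entries of the filling `T` of `P/Q` belong to the alphabet `{lo, …, hi}`. -/
def InAlpha (P Q : ℕ → ℕ) (T : ℕ → ℕ → ℕ) (lo hi : ℕ) : Prop :=
  ∀ i j, Q i ≤ j → j < P i → lo ≤ T i j ∧ T i j ≤ hi

/-- The number of occurrences of the symbol `s` among the first `j` columns of the
filling `T` of `P/Q`. -/
def cntCols (n : ℕ) (P Q : ℕ → ℕ) (T : ℕ → ℕ → ℕ) (s : ℕ) (j : ℕ) : ℕ :=
  ∑ i ∈ Finset.range n, ((Finset.Ico (Q i) (min j (P i))).filter (fun c => T i c = s)).card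

/-- The total number of occurrences of the symbol `s` in the filling `T` of `P/Q`. -/
def cntAll (n : ℕ) (P Q : ℕ → ℕ) (T : ℕ → ℕ → ℕ) (s : ℕ) : ℕ :=
  ∑ i ∈ Finset.range n, ((Finset.Ico (Q i) (P i)).filter (fun c => T i c = s)).card

/-- The filling `T` of `P/Q` is balanced with respect to the alphabet `{lo, …, hi}`:
each symbol occurs exactly `(#P/Q)/(hi+1-lo)` times. -/
def BalancedF (n : ℕ) (P Q : ℕ → ℕ) (T : ℕ → ℕ → ℕ) (lo hi : ℕ) : Prop :=
  ∀ s, lo ≤ s → s ≤ hi → (hi + 1 - lo) * cntAll n P Q T s = skewSize n P Q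

/-- The filling `T` of `P/Q` is `α_i`-codominant: among the first `j` columns there
are at least as many occurrences of `i+1` as of `i`, for every `j`. -/
def Codom (n : ℕ) (P Q : ℕ → ℕ) (T : ℕ → ℕ → ℕ) (i : ℕ) : Prop :=
  ∀ j, cntCols n P Q T i j ≤ cntCols n P Q T (i + 1) j

/-- The length of the bridge at height `i` (for `1 ≤ i ≤ n`) of the skew diagram
`P/Q`: the number of columns whose height in `Q` is `i-1` and in `P` is `i`. -/
def bridge (n : ℕ) (P Q : ℕ → ℕ) (i : ℕ) : ℕ :=
  ((Finset.range (P 0)).filter (fun j => colH n Q j = i - 1 ∧ colH n P j = i)).card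

/-- Divide-and-conquer lemma: if `α_k ∉ Θ`, a Young diagram `P` of order `n` admits a
`Θ`-codominant balanced semistandard `{1, …, n}`-filling iff there is `Q ⊆ P` with
`#Q = (k/n)·#P` such that `Q` admits a `(Θ ∩ {α₁,…,α_{k-1}})`-codominant balanced
semistandard `{1,…,k}`-filling and `P/Q` admits a `(Θ ∩ {α_{k+1},…,α_{n-1}})`-codominant
balanced semistandard `{k+1,…,n}`-filling. -/
lemma aux_downclosed (S : Finset ℕ) (h : ∀ b c, b ≤ c → c ∈ S → b ∈ S) (x : ℕ) :
    x ∈ S ↔ x < S.card := by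
  constructor
  · intro hx
    have hsub : Finset.range (x + 1) ⊆ S := fun b hb =>
      h b x (by simpa [Nat.lt_succ_iff] using Finset.mem_range.mp hb) hx
    have := Finset.card_le_card hsub
    simp only [Finset.card_range] at this
    omega
  · intro hx
    by_contra hxS
    have hsub : S ⊆ Finset.range x := by
      intro c hc
      rcases lt_or_ge c x with h' | h'
      · exact Finset.mem_range.mpr h'
      · exact absurd (h x c h' hc) hxS
    have := Finset.card_le_card hsub
    simp only [Finset.card_range] at this
    omega

theorem stmt_10 (n k : ℕ) (hn : 2 ≤ n) (hk1 : 1 ≤ k) (hkn : k ≤ n - 1)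
    (Θ : Finset ℕ) (hΘ : ∀ i ∈ Θ, 1 ≤ i ∧ i ≤ n - 1) (hkΘ : k ∉ Θ)
    (P : ℕ → ℕ) (hP : IsYoung n P) :
    (∃ T : ℕ → ℕ → ℕ, SkewSemistd P (fun _ => 0) T ∧ InAlpha P (fun _ => 0) T 1 n ∧
        BalancedF n P (fun _ => 0) T 1 n ∧ ∀ i ∈ Θ, Codom n P (fun _ => 0) T i) ↔
    (∃ Q : ℕ → ℕ, IsYoung k Q ∧ (∀ i, Q i ≤ P i) ∧
      (∃ TQ : ℕ → ℕ → ℕ, SkewSemistd Q (fun _ => 0) TQ ∧ InAlpha Q (fun _ => 0) TQ 1 k ∧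
          BalancedF k Q (fun _ => 0) TQ 1 k ∧
          ∀ i ∈ Θ, i < k → Codom k Q (fun _ => 0) TQ i) ∧
      (∃ TS : ℕ → ℕ → ℕ, SkewSemistd P Q TS ∧ InAlpha P Q TS (k + 1) n ∧
          BalancedF n P Q TS (k + 1) n ∧
          ∀ i ∈ Θ, k < i → Codom n P Q TS i) ∧
      n * ysize k Q = k * ysize n P) := by
  have hkn' : k ≤ n := by omega
  constructor
  · rintro ⟨T, ⟨hra, hca⟩, ha, hb, hd⟩
    have Pmono : ∀ i i', i ≤ i' → P i' ≤ P i := by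
      intro i i' h
      induction i', h using Nat.le_induction with
      | base => exact le_refl _
      | succ m hm ih => exact (hP.1 m).trans ih
    have rowmono : ∀ i j j', j ≤ j' → j' < P i → T i j ≤ T i j' := by
      intro i j j' h hj'
      induction j', h using Nat.le_induction with
      | base => exact le_refl _
      | succ m hm ih =>
        exact (ih (by omega)).trans (hra i m (Nat.zero_le _) hj')
    have colmono : ∀ i i' j, i ≤ i' → j < P i' → T i j + (i' - i) ≤ T i' j := by
      intro i i' j h hj
      induction i', h using Nat.le_induction with
      | base => simp
      | succ m hm ih =>
        have h1 : j < P m := lt_of_lt_of_le hj (hP.1 m)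
        have h2 := hca m j (Nat.zero_le _) hj
        have h3 := ih h1
        omega
    have hTlow : ∀ i j, j < P i → i + 1 ≤ T i j := by
      intro i j hj
      have h0 : j < P 0 := lt_of_lt_of_le hj (Pmono 0 i (Nat.zero_le _))
      have h1 := (ha 0 j (Nat.zero_le _) h0).1
      have h2 := colmono 0 i j (Nat.zero_le _) hj
      omega
    set Q : ℕ → ℕ := fun i => ((Finset.range (P i)).filter (fun j => T i j ≤ k)).card with hQdef
    have hQchar : ∀ i j, j < Q i ↔ (j < P i ∧ T i j ≤ k) := by
      intro i j
      have hdc : ∀ b c, b ≤ c → c ∈ (Finset.range (P i)).filter (fun j => T i j ≤ k) →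
          b ∈ (Finset.range (P i)).filter (fun j => T i j ≤ k) := by
        intro b c hbc hc
        simp only [Finset.mem_filter, Finset.mem_range] at hc ⊢
        exact ⟨lt_of_le_of_lt hbc hc.1, (rowmono i b c hbc hc.1).trans hc.2⟩
      have := (aux_downclosed _ hdc j).symm
      simp only [Finset.mem_filter, Finset.mem_range] at this
      exact this
    have hQP : ∀ i, Q i ≤ P i := by
      intro i
      simpa using Finset.card_filter_le (Finset.range (P i)) (fun j => T i j ≤ k)
    have hQmono : ∀ i, Q (i + 1) ≤ Q i := by
      intro i
      by_contra h
      push_neg at h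
      have h1 := (hQchar (i + 1) (Q i)).mp h
      have h2 : T i (Q i) < T (i + 1) (Q i) := hca i (Q i) (Nat.zero_le _) h1.1
      have h3 : Q i < P i := lt_of_lt_of_le h1.1 (hP.1 i)
      have h4 := hQchar i (Q i)
      omega
    have hQ0 : ∀ i, k ≤ i → Q i = 0 := by
      intro i hi
      by_contra h
      have h0 : 0 < Q i := Nat.pos_of_ne_zero h
      have h1 := (hQchar i 0).mp h0
      have h2 := hTlow i 0 h1.1
      omega
    have hball : ∀ s, 1 ≤ s → s ≤ n → n * cntAll n P (fun _ => 0) T s = ysize n P := by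
      intro s h1 h2
      have := hb s h1 h2
      simp only [skewSize, ysize, Nat.sub_zero, Nat.add_sub_cancel] at this ⊢
      convert this using 2
    set c := cntAll n P (fun _ => 0) T 1 with hcdef
    have hceq : ∀ s, 1 ≤ s → s ≤ n → cntAll n P (fun _ => 0) T s = c := by
      intro s h1 h2
      have e1 := hball s h1 h2
      have e2 := hball 1 le_rfl (by omega)
      exact Nat.eq_of_mul_eq_mul_left (by omega) (e1.trans e2.symm)
    -- count transfer lemmas
    have hcntQall : ∀ s, s ≤ k → cntAll n P (fun _ => 0) T s = cntAll k Q (fun _ => 0) T s := by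
      intro s hs
      unfold cntAll
      have hrw : ∀ i, ((Finset.Ico 0 (P i)).filter (fun cc => T i cc = s)).card
          = ((Finset.Ico 0 (Q i)).filter (fun cc => T i cc = s)).card := by
        intro i
        congr 1
        ext cc
        simp only [Finset.mem_filter, Finset.mem_Ico, Nat.zero_le, true_and]
        constructor
        · rintro ⟨h1, h2⟩
          exact ⟨(hQchar i cc).mpr ⟨h1, by omega⟩, h2⟩
        · rintro ⟨h1, h2⟩
          exact ⟨((hQchar i cc).mp h1).1, h2⟩
      calc ∑ i ∈ Finset.range n, ((Finset.Ico 0 (P i)).filter (fun cc => T i cc = s)).card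
          = ∑ i ∈ Finset.range n, ((Finset.Ico 0 (Q i)).filter (fun cc => T i cc = s)).card :=
            Finset.sum_congr rfl (fun i _ => hrw i)
        _ = ∑ i ∈ Finset.range k, ((Finset.Ico 0 (Q i)).filter (fun cc => T i cc = s)).card := by
            refine (Finset.sum_subset (Finset.range_subset_range.mpr hkn') ?_).symm
            intro i _ hik
            have : k ≤ i := by simpa using hik
            simp [hQ0 i this]
    have hcntQcols : ∀ s, s ≤ k → ∀ j,
        cntCols n P (fun _ => 0) T s j = cntCols k Q (fun _ => 0) T s j := by
      intro s hs j
      unfold cntCols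
      have hrw : ∀ i, ((Finset.Ico 0 (min j (P i))).filter (fun cc => T i cc = s)).card
          = ((Finset.Ico 0 (min j (Q i))).filter (fun cc => T i cc = s)).card := by
        intro i
        congr 1
        ext cc
        simp only [Finset.mem_filter, Finset.mem_Ico, Nat.zero_le, true_and, lt_min_iff]
        constructor
        · rintro ⟨⟨h1, h2⟩, h3⟩
          exact ⟨⟨h1, (hQchar i cc).mpr ⟨h2, by omega⟩⟩, h3⟩
        · rintro ⟨⟨h1, h2⟩, h3⟩
          exact ⟨⟨h1, ((hQchar i cc).mp h2).1⟩, h3⟩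
      calc ∑ i ∈ Finset.range n, ((Finset.Ico 0 (min j (P i))).filter (fun cc => T i cc = s)).card
          = ∑ i ∈ Finset.range n, ((Finset.Ico 0 (min j (Q i))).filter (fun cc => T i cc = s)).card :=
            Finset.sum_congr rfl (fun i _ => hrw i)
        _ = ∑ i ∈ Finset.range k, ((Finset.Ico 0 (min j (Q i))).filter (fun cc => T i cc = s)).card := by
            refine (Finset.sum_subset (Finset.range_subset_range.mpr hkn') ?_).symm
            intro i _ hik
            have : k ≤ i := by simpa using hik
            simp [hQ0 i this]
    have hcntSall : ∀ s, k + 1 ≤ s → cntAll n P (fun _ => 0) T s = cntAll n P Q T s := by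
      intro s hs
      unfold cntAll
      refine Finset.sum_congr rfl (fun i _ => ?_)
      congr 1
      ext cc
      simp only [Finset.mem_filter, Finset.mem_Ico, Nat.zero_le, true_and]
      constructor
      · rintro ⟨h1, h2⟩
        have : ¬ cc < Q i := fun h => by have := (hQchar i cc).mp h; omega
        exact ⟨⟨by omega, h1⟩, h2⟩
      · rintro ⟨⟨h1, h2⟩, h3⟩
        exact ⟨h2, h3⟩
    have hcntScols : ∀ s, k + 1 ≤ s → ∀ j,
        cntCols n P (fun _ => 0) T s j = cntCols n P Q T s j := by
      intro s hs j
      unfold cntCols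
      refine Finset.sum_congr rfl (fun i _ => ?_)
      congr 1
      ext cc
      simp only [Finset.mem_filter, Finset.mem_Ico, Nat.zero_le, true_and, lt_min_iff]
      constructor
      · rintro ⟨⟨h1, h2⟩, h3⟩
        have : ¬ cc < Q i := fun h => by have := (hQchar i cc).mp h; omega
        exact ⟨⟨by omega, h1, h2⟩, h3⟩
      · rintro ⟨⟨h1, h2, h3⟩, h4⟩
        exact ⟨⟨h2, h3⟩, h4⟩
    -- size identities
    have hysQ : ysize k Q = k * c := by
      have hfib : ∀ i, Q i = ∑ s ∈ Finset.Icc 1 k,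
          ((Finset.Ico 0 (Q i)).filter (fun cc => T i cc = s)).card := by
        intro i
        have hmap : ∀ cc ∈ Finset.Ico 0 (Q i), T i cc ∈ Finset.Icc 1 k := by
          intro cc hcc
          simp only [Finset.mem_Ico, Nat.zero_le, true_and] at hcc
          have h1 := (hQchar i cc).mp hcc
          have h2 := (ha i cc (Nat.zero_le _) h1.1).1
          simp only [Finset.mem_Icc]
          omega
        have := Finset.card_eq_sum_card_fiberwise hmap
        simpa using this
      calc ysize k Q = ∑ i ∈ Finset.range k, Q i := rfl
        _ = ∑ i ∈ Finset.range k, ∑ s ∈ Finset.Icc 1 k,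
              ((Finset.Ico 0 (Q i)).filter (fun cc => T i cc = s)).card :=
            Finset.sum_congr rfl (fun i _ => hfib i)
        _ = ∑ s ∈ Finset.Icc 1 k, ∑ i ∈ Finset.range k,
              ((Finset.Ico 0 (Q i)).filter (fun cc => T i cc = s)).card := Finset.sum_comm
        _ = ∑ s ∈ Finset.Icc 1 k, c := by
            refine Finset.sum_congr rfl (fun s hs => ?_)
            have hs' := Finset.mem_Icc.mp hs
            have e1 : cntAll k Q (fun _ => 0) T s = ∑ i ∈ Finset.range k,
                ((Finset.Ico 0 (Q i)).filter (fun cc => T i cc = s)).card := rfl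
            rw [← e1, ← hcntQall s hs'.2]
            exact hceq s hs'.1 (by omega)
        _ = k * c := by
            rw [Finset.sum_const, Nat.card_Icc, smul_eq_mul]
            congr 1
    have hskQ : skewSize n P Q = (n - k) * c := by
      have hfib : ∀ i, P i - Q i = ∑ s ∈ Finset.Icc (k + 1) n,
          ((Finset.Ico (Q i) (P i)).filter (fun cc => T i cc = s)).card := by
        intro i
        have hmap : ∀ cc ∈ Finset.Ico (Q i) (P i), T i cc ∈ Finset.Icc (k + 1) n := by
          intro cc hcc
          simp only [Finset.mem_Ico] at hcc
          have h2 := (ha i cc (Nat.zero_le _) hcc.2).2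
          have h3 : ¬ cc < Q i := by omega
          have h4 := hQchar i cc
          simp only [Finset.mem_Icc]
          omega
        have := Finset.card_eq_sum_card_fiberwise hmap
        simpa [Nat.card_Ico] using this
      calc skewSize n P Q = ∑ i ∈ Finset.range n, (P i - Q i) := rfl
        _ = ∑ i ∈ Finset.range n, ∑ s ∈ Finset.Icc (k + 1) n,
              ((Finset.Ico (Q i) (P i)).filter (fun cc => T i cc = s)).card :=
            Finset.sum_congr rfl (fun i _ => hfib i)
        _ = ∑ s ∈ Finset.Icc (k + 1) n, ∑ i ∈ Finset.range n,
              ((Finset.Ico (Q i) (P i)).filter (fun cc => T i cc = s)).card := Finset.sum_comm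
        _ = ∑ s ∈ Finset.Icc (k + 1) n, c := by
            refine Finset.sum_congr rfl (fun s hs => ?_)
            have hs' := Finset.mem_Icc.mp hs
            have e1 : cntAll n P Q T s = ∑ i ∈ Finset.range n,
                ((Finset.Ico (Q i) (P i)).filter (fun cc => T i cc = s)).card := rfl
            rw [← e1, ← hcntSall s hs'.1]
            exact hceq s (by omega) hs'.2
        _ = (n - k) * c := by
            rw [Finset.sum_const, Nat.card_Icc, smul_eq_mul]
            congr 1
            omega
    have hysP : ysize n P = n * c := (hball 1 le_rfl (by omega)).symm
    refine ⟨Q, ⟨hQmono, hQ0⟩, hQP, ⟨T, ⟨?_, ?_⟩, ?_, ?_, ?_⟩, ⟨T, ⟨?_, ?_⟩, ?_, ?_, ?_⟩, ?_⟩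
    · intro i j _ hj
      exact hra i j (Nat.zero_le _) (lt_of_lt_of_le hj (hQP i))
    · intro i j _ hj
      exact hca i j (Nat.zero_le _) (lt_of_lt_of_le hj (hQP (i + 1)))
    · intro i j _ hj
      have h1 := (hQchar i j).mp hj
      exact ⟨(ha i j (Nat.zero_le _) h1.1).1, h1.2⟩
    · intro s h1 h2
      have hsk : skewSize k Q (fun _ => 0) = ysize k Q := by
        simp [skewSize, ysize]
      rw [hsk, hysQ, show k + 1 - 1 = k from by omega, ← hcntQall s h2, hceq s h1 (by omega)]
    · intro i hiΘ hik j
      rw [← hcntQcols i (by omega) j, ← hcntQcols (i + 1) (by omega) j]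
      exact hd i hiΘ j
    · intro i j h1 h2
      exact hra i j (Nat.zero_le _) h2
    · intro i j h1 h2
      exact hca i j (Nat.zero_le _) h2
    · intro i j h1 h2
      have h3 := hQchar i j
      have h4 := (ha i j (Nat.zero_le _) h2).2
      constructor
      · omega
      · exact h4
    · intro s h1 h2
      rw [show n + 1 - (k + 1) = n - k from by omega, hskQ, ← hcntSall s h1,
        hceq s (by omega) h2]
    · intro i hiΘ hik j
      rw [← hcntScols i (by omega) j, ← hcntScols (i + 1) (by omega) j]
      exact hd i hiΘ j
    · rw [hysQ, hysP]
      ring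
  · rintro ⟨Q, hQy, hQP, ⟨TQ, ⟨hQr, hQc⟩, hQa, hQb, hQd⟩,
      ⟨TS, ⟨hSr, hSc⟩, hSa, hSb, hSd⟩, hsz⟩
    set T : ℕ → ℕ → ℕ := fun i j => if j < Q i then TQ i j else TS i j with hTdef
    have hTQ : ∀ i j, j < Q i → T i j = TQ i j := by
      intro i j h
      simp only [hTdef, if_pos h]
    have hTS : ∀ i j, Q i ≤ j → T i j = TS i j := by
      intro i j h
      simp only [hTdef, if_neg (Nat.not_lt.mpr h)]
    have hTlo : ∀ i j, j < Q i → 1 ≤ T i j ∧ T i j ≤ k := by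
      intro i j h
      rw [hTQ i j h]
      exact hQa i j (Nat.zero_le _) h
    have hThi : ∀ i j, Q i ≤ j → j < P i → k + 1 ≤ T i j ∧ T i j ≤ n := by
      intro i j h1 h2
      rw [hTS i j h1]
      exact hSa i j h1 h2
    -- count transfers
    have hcQall : ∀ s, s ≤ k →
        cntAll n P (fun _ => 0) T s = cntAll k Q (fun _ => 0) TQ s := by
      intro s hs
      unfold cntAll
      have hrw : ∀ i, ((Finset.Ico 0 (P i)).filter (fun cc => T i cc = s)).card
          = ((Finset.Ico 0 (Q i)).filter (fun cc => TQ i cc = s)).card := by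
        intro i
        congr 1
        ext cc
        simp only [Finset.mem_filter, Finset.mem_Ico, Nat.zero_le, true_and]
        constructor
        · rintro ⟨h1, h2⟩
          have h3 : cc < Q i := by
            by_contra h4
            have := (hThi i cc (by omega) h1).1
            omega
          exact ⟨h3, by rw [← hTQ i cc h3]; exact h2⟩
        · rintro ⟨h1, h2⟩
          exact ⟨lt_of_lt_of_le h1 (hQP i), by rw [hTQ i cc h1]; exact h2⟩
      calc ∑ i ∈ Finset.range n, ((Finset.Ico 0 (P i)).filter (fun cc => T i cc = s)).card
          = ∑ i ∈ Finset.range n, ((Finset.Ico 0 (Q i)).filter (fun cc => TQ i cc = s)).card :=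
            Finset.sum_congr rfl (fun i _ => hrw i)
        _ = ∑ i ∈ Finset.range k, ((Finset.Ico 0 (Q i)).filter (fun cc => TQ i cc = s)).card := by
            refine (Finset.sum_subset (Finset.range_subset_range.mpr hkn') ?_).symm
            intro i _ hik
            have : k ≤ i := by simpa using hik
            simp [hQy.2 i this]
    have hcQcols : ∀ s, s ≤ k → ∀ j,
        cntCols n P (fun _ => 0) T s j = cntCols k Q (fun _ => 0) TQ s j := by
      intro s hs j
      unfold cntCols
      have hrw : ∀ i, ((Finset.Ico 0 (min j (P i))).filter (fun cc => T i cc = s)).card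
          = ((Finset.Ico 0 (min j (Q i))).filter (fun cc => TQ i cc = s)).card := by
        intro i
        congr 1
        ext cc
        simp only [Finset.mem_filter, Finset.mem_Ico, Nat.zero_le, true_and, lt_min_iff]
        constructor
        · rintro ⟨⟨h1, h2⟩, h3⟩
          have h4 : cc < Q i := by
            by_contra h5
            have := (hThi i cc (by omega) h2).1
            omega
          exact ⟨⟨h1, h4⟩, by rw [← hTQ i cc h4]; exact h3⟩
        · rintro ⟨⟨h1, h2⟩, h3⟩
          exact ⟨⟨h1, lt_of_lt_of_le h2 (hQP i)⟩, by rw [hTQ i cc h2]; exact h3⟩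
      calc ∑ i ∈ Finset.range n, ((Finset.Ico 0 (min j (P i))).filter (fun cc => T i cc = s)).card
          = ∑ i ∈ Finset.range n,
              ((Finset.Ico 0 (min j (Q i))).filter (fun cc => TQ i cc = s)).card :=
            Finset.sum_congr rfl (fun i _ => hrw i)
        _ = ∑ i ∈ Finset.range k,
              ((Finset.Ico 0 (min j (Q i))).filter (fun cc => TQ i cc = s)).card := by
            refine (Finset.sum_subset (Finset.range_subset_range.mpr hkn') ?_).symm
            intro i _ hik
            have : k ≤ i := by simpa using hik
            simp [hQy.2 i this]
    have hcSall : ∀ s, k + 1 ≤ s →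
        cntAll n P (fun _ => 0) T s = cntAll n P Q TS s := by
      intro s hs
      unfold cntAll
      refine Finset.sum_congr rfl (fun i _ => ?_)
      congr 1
      ext cc
      simp only [Finset.mem_filter, Finset.mem_Ico, Nat.zero_le, true_and]
      constructor
      · rintro ⟨h1, h2⟩
        have h3 : Q i ≤ cc := by
          by_contra h4
          have := (hTlo i cc (by omega)).2
          omega
        exact ⟨⟨h3, h1⟩, by rw [← hTS i cc h3]; exact h2⟩
      · rintro ⟨⟨h1, h2⟩, h3⟩
        exact ⟨h2, by rw [hTS i cc h1]; exact h3⟩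
    have hcScols : ∀ s, k + 1 ≤ s → ∀ j,
        cntCols n P (fun _ => 0) T s j = cntCols n P Q TS s j := by
      intro s hs j
      unfold cntCols
      refine Finset.sum_congr rfl (fun i _ => ?_)
      congr 1
      ext cc
      simp only [Finset.mem_filter, Finset.mem_Ico, Nat.zero_le, true_and, lt_min_iff]
      constructor
      · rintro ⟨⟨h1, h2⟩, h3⟩
        have h4 : Q i ≤ cc := by
          by_contra h5
          have := (hTlo i cc (by omega)).2
          omega
        exact ⟨⟨h4, h1, h2⟩, by rw [← hTS i cc h4]; exact h3⟩
      · rintro ⟨⟨h1, h2, h3⟩, h4⟩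
        exact ⟨⟨h2, h3⟩, by rw [hTS i cc h1]; exact h4⟩
    -- size relations
    have hsumQ : ysize k Q = ∑ i ∈ Finset.range n, Q i := by
      refine Finset.sum_subset (Finset.range_subset_range.mpr hkn') ?_
      intro i _ hik
      exact hQy.2 i (by simpa using hik)
    have hskewadd : skewSize n P Q + ysize k Q = ysize n P := by
      rw [hsumQ]
      unfold skewSize ysize
      rw [← Finset.sum_add_distrib]
      exact Finset.sum_congr rfl (fun i _ => Nat.sub_add_cancel (hQP i))
    refine ⟨T, ⟨?_, ?_⟩, ?_, ?_, ?_⟩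
    · -- rows weakly increase
      intro i j _ hj
      by_cases h1 : j + 1 < Q i
      · rw [hTQ i j (by omega), hTQ i (j + 1) h1]
        exact hQr i j (Nat.zero_le _) h1
      · by_cases h2 : j < Q i
        · have e1 := (hTlo i j h2).2
          have e2 := (hThi i (j + 1) (by omega) hj).1
          omega
        · rw [hTS i j (by omega), hTS i (j + 1) (by omega)]
          exact hSr i j (by omega) hj
    · -- columns strictly increase
      intro i j _ hj
      by_cases h1 : j < Q (i + 1)
      · have h2 : j < Q i := lt_of_lt_of_le h1 (hQy.1 i)
        rw [hTQ i j h2, hTQ (i + 1) j h1]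
        exact hQc i j (Nat.zero_le _) h1
      · by_cases h2 : j < Q i
        · have e1 := (hTlo i j h2).2
          have e2 := (hThi (i + 1) j (by omega) hj).1
          omega
        · rw [hTS i j (by omega), hTS (i + 1) j (by omega)]
          exact hSc i j (by omega) hj
    · -- alphabet
      intro i j _ hj
      by_cases h : j < Q i
      · have := hTlo i j h
        omega
      · have := hThi i j (by omega) hj
        omega
    · -- balanced
      intro s h1 h2
      have hsk0 : skewSize n P (fun _ => 0) = ysize n P := by
        simp [skewSize, ysize]
      rw [hsk0, show n + 1 - 1 = n from by omega]
      by_cases hs : s ≤ k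
      · have e := hQb s h1 hs
        have hskQ0 : skewSize k Q (fun _ => 0) = ysize k Q := by
          simp [skewSize, ysize]
        rw [hskQ0, show k + 1 - 1 = k from by omega] at e
        have e' : k * cntAll n P (fun _ => 0) T s = ysize k Q := by
          rw [hcQall s hs]
          exact e
        have key : k * (n * cntAll n P (fun _ => 0) T s) = k * ysize n P := by
          calc k * (n * cntAll n P (fun _ => 0) T s)
              = n * (k * cntAll n P (fun _ => 0) T s) := by ring
            _ = n * ysize k Q := by rw [e']
            _ = k * ysize n P := hsz
        exact Nat.eq_of_mul_eq_mul_left (by omega) key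
      · push_neg at hs
        have e := hSb s (by omega) h2
        rw [show n + 1 - (k + 1) = n - k from by omega] at e
        have e' : (n - k) * cntAll n P (fun _ => 0) T s = skewSize n P Q := by
          rw [hcSall s (by omega)]
          exact e
        have h4 : n * skewSize n P Q + n * ysize k Q = n * ysize n P := by
          rw [← Nat.mul_add, hskewadd]
        rw [hsz] at h4
        have h6 : (n - k) * ysize n P + k * ysize n P = n * ysize n P := by
          rw [← Nat.add_mul, Nat.sub_add_cancel hkn']
        have h7 : n * skewSize n P Q = (n - k) * ysize n P :=
          Nat.add_right_cancel (h4.trans h6.symm)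
        have key : (n - k) * (n * cntAll n P (fun _ => 0) T s)
            = (n - k) * ysize n P := by
          calc (n - k) * (n * cntAll n P (fun _ => 0) T s)
              = n * ((n - k) * cntAll n P (fun _ => 0) T s) := by ring
            _ = n * skewSize n P Q := by rw [e']
            _ = (n - k) * ysize n P := h7
        exact Nat.eq_of_mul_eq_mul_left (by omega) key
    · -- codominance
      intro i hiΘ j
      have hik : i ≠ k := fun h => hkΘ (h ▸ hiΘ)
      by_cases h : i < k
      · rw [hcQcols i (by omega) j, hcQcols (i + 1) (by omega) j]
        exact hQd i hiΘ h j
      · have h' : k < i := by omega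
        rw [hcScols i (by omega) j, hcScols (i + 1) (by omega) j]
        exact hSd i hiΘ h' j
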